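/- arXiv:1302.5269 — 2 statements merged into one kernel-verified Lean document; each statement's English description precedes it below -/
import Mathlib

section
/- For every real l > 0 and every complex k with k² not of the form ((2n-1)π/(2l))² for any positive integer n and k ≠ 0, the series (1/l) ∑_{n=1}^∞ 1/(((2n-1)π/(2l))² - k²) converges and equals tan(kl)/(2k). -/
open Complex intervalIntegral

section helpers
private lemma gfs_deriv (k ω c : ℂ) (hD : k ^ 2 - ω ^ 2 ≠ 0) (x : ℝ) :
    HasDerivAt (fun y : ℝ => Complex.exp (-(Complex.I * ω) * y) *
        (-(Complex.I * ω) * Complex.sin (k * (c - y)) + k * Complex.cos (k * (c - y))) /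
        (k ^ 2 - ω ^ 2))
      (Complex.exp (-(Complex.I * ω) * x) * Complex.sin (k * (c - x))) x := by
  have H : HasDerivAt (fun w : ℂ => Complex.exp (-(Complex.I * ω) * w) *
        (-(Complex.I * ω) * Complex.sin (k * (c - w)) + k * Complex.cos (k * (c - w))) /
        (k ^ 2 - ω ^ 2))
      (Complex.exp (-(Complex.I * ω) * (x : ℂ)) * Complex.sin (k * (c - (x : ℂ)))) (x : ℂ) := by
    have hinner : HasDerivAt (fun w : ℂ => k * (c - w)) (-k) (x : ℂ) := by
      simpa using (((hasDerivAt_id (x : ℂ)).const_sub c).const_mul k)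
    have he : HasDerivAt (fun w : ℂ => Complex.exp (-(Complex.I * ω) * w))
        (-(Complex.I * ω) * Complex.exp (-(Complex.I * ω) * (x : ℂ))) (x : ℂ) := by
      have := (Complex.hasDerivAt_exp (-(Complex.I * ω) * (x : ℂ))).comp (x : ℂ)
          ((hasDerivAt_id (x : ℂ)).const_mul (-(Complex.I * ω)))
      simpa [Function.comp_def, mul_comm] using this
    have hs : HasDerivAt (fun w : ℂ => Complex.sin (k * (c - w)))
        (Complex.cos (k * (c - (x : ℂ))) * (-k)) (x : ℂ) :=
      (Complex.hasDerivAt_sin _).comp _ hinner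
    have hc : HasDerivAt (fun w : ℂ => Complex.cos (k * (c - w)))
        (-Complex.sin (k * (c - (x : ℂ))) * (-k)) (x : ℂ) :=
      (Complex.hasDerivAt_cos _).comp _ hinner
    have hsum : HasDerivAt (fun w : ℂ =>
        -(Complex.I * ω) * Complex.sin (k * (c - w)) + k * Complex.cos (k * (c - w)))
        (-(Complex.I * ω) * (Complex.cos (k * (c - (x : ℂ))) * (-k)) +
          k * (-Complex.sin (k * (c - (x : ℂ))) * (-k))) (x : ℂ) :=
      (hs.const_mul _).add (hc.const_mul k)
    have := (he.mul hsum).div_const (k ^ 2 - ω ^ 2)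
    refine this.congr_deriv ?_
    field_simp
    ring_nf
    rw [Complex.I_sq]
    ring
  exact H.comp_ofReal

private lemma gfs_integral (k ω c : ℂ) (hD : k ^ 2 - ω ^ 2 ≠ 0) (a b : ℝ) :
    ∫ x in a..b, Complex.exp (-(Complex.I * ω) * x) * Complex.sin (k * (c - x)) =
      (Complex.exp (-(Complex.I * ω) * b) *
        (-(Complex.I * ω) * Complex.sin (k * (c - b)) + k * Complex.cos (k * (c - b))) /
        (k ^ 2 - ω ^ 2)) -
      (Complex.exp (-(Complex.I * ω) * a) *
        (-(Complex.I * ω) * Complex.sin (k * (c - a)) + k * Complex.cos (k * (c - a))) /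
        (k ^ 2 - ω ^ 2)) := by
  refine integral_eq_sub_of_hasDerivAt (fun x _ => gfs_deriv k ω c hD x) ?_
  apply Continuous.intervalIntegrable
  fun_prop

private lemma gfs_exp_int (n : ℤ) : Complex.exp ((n : ℂ) * ((Real.pi : ℂ) * Complex.I)) =
    (-1 : ℂ) ^ n := by
  rw [Complex.exp_int_mul, Complex.exp_pi_mul_I]
end helpers

set_option maxHeartbeats 2000000 in
/-- For `l > 0` and `k ∈ ℂ`, `k ≠ 0`, with `k²` avoiding the Dirichlet eigenvalues
`((2n-1)π/(2l))²`, the series `(1/l) ∑_{n≥1} 1/(((2n-1)π/(2l))² - k²)` converges to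
`tan(kl)/(2k)`. -/
theorem greens_function_series (l : ℝ) (hl : 0 < l) (k : ℂ) (hk : k ≠ 0)
    (hk2 : ∀ n : ℕ, 1 ≤ n →
      k ^ 2 ≠ ((2 * (n : ℂ) - 1) * (Real.pi : ℂ) / (2 * (l : ℂ))) ^ 2) :
    HasSum
      (fun n : ℕ =>
        (1 / (l : ℂ)) *
          (1 / (((2 * ((n : ℂ) + 1) - 1) * (Real.pi : ℂ) / (2 * (l : ℂ))) ^ 2 - k ^ 2)))
      (Complex.tan (k * (l : ℂ)) / (2 * k)) := by
  have hl0 : (l : ℂ) ≠ 0 := Complex.ofReal_ne_zero.2 hl.ne'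
  -- k² avoids all odd frequencies squared
  have hk2' : ∀ n : ℤ, Odd n → k ^ 2 - ((Real.pi : ℂ) * n / (2 * l)) ^ 2 ≠ 0 := by
    have key : ∀ (N : ℕ) (n : ℤ), 1 ≤ N → ((n : ℂ)) ^ 2 = (2 * (N : ℂ) - 1) ^ 2 →
        k ^ 2 - ((Real.pi : ℂ) * n / (2 * l)) ^ 2 ≠ 0 := by
      intro N n hN hsq
      rw [sub_ne_zero]
      intro hcon
      apply hk2 N hN
      rw [hcon, div_pow, div_pow, mul_pow, mul_pow, hsq]
      ring
    intro n hn
    obtain ⟨j, hj⟩ := hn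
    rcases le_or_gt 0 j with hj0 | hj0
    · refine key (j.toNat + 1) n (by omega) ?_
      have hjc : ((j.toNat : ℕ) : ℂ) = (j : ℂ) := by
        exact_mod_cast congrArg (fun z : ℤ => (z : ℂ)) (Int.toNat_of_nonneg hj0)
      have hnc : (n : ℂ) = 2 * (j : ℂ) + 1 := by rw [hj]; push_cast; ring
      rw [hnc]; push_cast [hjc]; ring
    · refine key ((-j).toNat) n (by omega) ?_
      have hjc : (((-j).toNat : ℕ) : ℂ) = -(j : ℂ) := by
        exact_mod_cast congrArg (fun z : ℤ => (z : ℂ)) (Int.toNat_of_nonneg (by omega : (0:ℤ) ≤ -j))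
      have hnc : (n : ℂ) = 2 * (j : ℂ) + 1 := by rw [hj]; push_cast; ring
      rw [hnc, hjc]; ring
  -- cos (k l) ≠ 0
  have hcos : Complex.cos (k * l) ≠ 0 := by
    intro h0
    obtain ⟨m, hm⟩ := Complex.cos_eq_zero_iff.1 h0
    have hkeq : k = (Real.pi : ℂ) * (2 * m + 1) / (2 * l) := by
      rw [eq_div_iff (by simpa using hl0 : (2 * (l:ℂ)) ≠ 0)]
      push_cast at hm ⊢
      linear_combination 2 * hm
    have : k ^ 2 - ((Real.pi : ℂ) * ((2*m+1 : ℤ) : ℂ) / (2 * l)) ^ 2 ≠ 0 :=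
      hk2' (2*m+1) ⟨m, by ring⟩
    apply this
    rw [hkeq]
    push_cast
    ring
  haveI hTfact : Fact ((0:ℝ) < 4 * l) := ⟨by linarith⟩
  set h : ℝ → ℂ := fun x => Complex.sin (k * ((l : ℂ) - ((|x| : ℝ) : ℂ))) with hdef
  have hcont : Continuous h := by fun_prop
  have hends : h (-(2*l)) = h (-(2*l) + 4*l) := by
    have e1 : |(-(2*l) : ℝ)| = 2*l := by
      rw [abs_neg, _root_.abs_of_nonneg (by linarith : (0:ℝ) ≤ 2*l)]
    have e2 : |(-(2*l) + 4*l : ℝ)| = 2*l := by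
      rw [show -(2*l)+4*l = 2*l by ring, _root_.abs_of_nonneg (by linarith : (0:ℝ) ≤ 2*l)]
    simp only [hdef, e1, e2]
  have hends' : h (-(2*l)) = h (2*l) := by
    rw [hends, show -(2*l)+4*l = 2*l by ring]
  set f0 : C(AddCircle (4*l), ℂ) :=
    ⟨AddCircle.liftIco (4*l) (-(2*l)) h, AddCircle.liftIco_continuous hends hcont.continuousOn⟩
    with hf0def
  have hf0 : ∀ x ∈ Set.Icc (-(2*l)) (2*l), f0 ((x : ℝ) : AddCircle (4*l)) = h x := by
    intro x hx
    rcases eq_or_lt_of_le hx.2 with heq | hlt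
    · have hcoe : ((2*l : ℝ) : AddCircle (4*l)) = ((-(2*l) : ℝ) : AddCircle (4*l)) := by
        have h2 := AddCircle.coe_add_period (4*l) (-(2*l))
        rw [show -(2*l) + 4*l = 2*l by ring] at h2
        exact h2
      rw [heq, hcoe]
      show AddCircle.liftIco (4*l) (-(2*l)) h _ = h (2*l)
      rw [AddCircle.liftIco_coe_apply ⟨le_refl _, by linarith⟩]
      exact hends'
    · show AddCircle.liftIco (4*l) (-(2*l)) h _ = h x
      exact AddCircle.liftIco_coe_apply ⟨hx.1, by linarith⟩
  set E : ℤ → ℝ → ℂ := fun m x =>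
    Complex.exp (2 * (Real.pi : ℂ) * Complex.I * (m : ℂ) * (x : ℂ) / ((4*l : ℝ) : ℂ)) with Edef
  set ω : ℤ → ℂ := fun n => (Real.pi : ℂ) * n / (2 * l) with hω
  set cF : ℤ → ℂ := fun n =>
    if Odd n then (k * Complex.cos (k * l) / l) * (1 / (ω n ^ 2 - k ^ 2)) else 0 with hcF
  have hcFodd : ∀ n : ℤ, Odd n →
      cF n = (k * Complex.cos (k * l) / l) * (1 / (ω n ^ 2 - k ^ 2)) := by
    intro n hn; rw [hcF]; simp only [if_pos hn]
  have hcFeven : ∀ n : ℤ, ¬ Odd n → cF n = 0 := by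
    intro n hn; rw [hcF]; simp only [if_neg hn]
  have hEcont : ∀ m : ℤ, Continuous fun x => E m x * h x := by
    intro m; apply Continuous.mul ?_ hcont
    simp only [Edef]; fun_prop
  have hcoeff : ∀ n : ℤ, fourierCoeff (⇑f0) n = cF n := by
    intro n
    rw [fourierCoeff_eq_intervalIntegral (⇑f0) n (-(2*l))]
    have hstep1 : (∫ x in (-(2*l))..(-(2*l) + 4*l),
        (fourier (-n) ((x : ℝ) : AddCircle (4*l)) : ℂ) • f0 ((x : ℝ) : AddCircle (4*l)))
        = ∫ x in (-(2*l))..(2*l), E (-n) x * h x := by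
      rw [show -(2*l) + 4*l = 2*l by ring]
      apply intervalIntegral.integral_congr
      intro x hx
      rw [Set.uIcc_of_le (by linarith)] at hx
      show (fourier (-n) ((x : ℝ) : AddCircle (4*l)) : ℂ) • f0 ((x : ℝ) : AddCircle (4*l))
        = E (-n) x * h x
      rw [smul_eq_mul, fourier_coe_apply, hf0 x hx]
    have hsplit : (∫ x in (-(2*l))..(2*l), E (-n) x * h x)
        = (∫ x in (-(2*l))..(0:ℝ), E (-n) x * h x) + ∫ x in (0:ℝ)..(2*l), E (-n) x * h x :=
      (intervalIntegral.integral_add_adjacent_intervals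
        ((hEcont (-n)).intervalIntegrable _ _) ((hEcont (-n)).intervalIntegrable _ _)).symm
    have hleft : (∫ x in (-(2*l))..(0:ℝ), E (-n) x * h x)
        = (-(-1:ℂ)^n) * ∫ x in (0:ℝ)..(2*l), E (-n) x * h x := by
      have hptw : ∀ x ∈ Set.uIcc (0:ℝ) (2*l),
          E (-n) (x - 2*l) * h (x - 2*l) = (-(-1:ℂ)^n) * (E (-n) x * h x) := by
        intro x hx
        rw [Set.uIcc_of_le (by linarith)] at hx
        have hE : E (-n) (x - 2*l) = (-1:ℂ)^n * E (-n) x := by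
          simp only [Edef]
          rw [← gfs_exp_int n, ← Complex.exp_add]
          congr 1
          push_cast
          field_simp
          ring
        have hh : h (x - 2*l) = - h x := by
          have h1 : |x - 2*l| = 2*l - x := by
            rw [abs_of_nonpos (by linarith [hx.2] : x - 2*l ≤ 0)]; ring
          have h2 : |x| = x := _root_.abs_of_nonneg hx.1
          simp only [hdef, h1, h2]
          rw [show k * ((l:ℂ) - ((2*l - x : ℝ):ℂ)) = -(k * ((l:ℂ) - ((x:ℝ):ℂ))) by
            push_cast; ring, Complex.sin_neg]
        rw [hE, hh]; ring
      calc (∫ x in (-(2*l))..(0:ℝ), E (-n) x * h x)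
          = ∫ x in (0:ℝ)..(2*l), E (-n) (x - 2*l) * h (x - 2*l) := by
            rw [intervalIntegral.integral_comp_sub_right (fun x => E (-n) x * h x) (2*l)]
            norm_num
        _ = ∫ x in (0:ℝ)..(2*l), (-(-1:ℂ)^n) * (E (-n) x * h x) :=
            intervalIntegral.integral_congr hptw
        _ = (-(-1:ℂ)^n) * ∫ x in (0:ℝ)..(2*l), E (-n) x * h x :=
            intervalIntegral.integral_const_mul _ _
    rcases Int.even_or_odd n with hev | hodd
    · have hm1 : (-1:ℂ)^n = 1 := hev.neg_one_zpow
      rw [hstep1, hsplit, hleft, hm1, hcF]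
      simp [Int.not_odd_iff_even.2 hev]
    · have hm1 : (-1:ℂ)^n = -1 := hodd.neg_one_zpow
      have hD : k^2 - (ω n)^2 ≠ 0 := by
        have := hk2' n hodd
        simpa [hω] using this
      have hJ : (∫ x in (0:ℝ)..(2*l), E (-n) x * h x)
          = -2*k*Complex.cos (k*l)/(k^2-(ω n)^2) := by
        have hptw2 : ∀ x ∈ Set.uIcc (0:ℝ) (2*l),
            E (-n) x * h x
            = Complex.exp (-(Complex.I * ω n) * (x:ℝ)) * Complex.sin (k * ((l:ℂ) - (x:ℝ))) := by
          intro x hx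
          rw [Set.uIcc_of_le (by linarith)] at hx
          have h2 : |x| = x := _root_.abs_of_nonneg hx.1
          simp only [Edef, hdef, h2]
          congr 2
          simp only [hω]
          push_cast
          field_simp
          ring
        rw [intervalIntegral.integral_congr hptw2, gfs_integral k (ω n) l hD 0 (2*l)]
        have he2l : Complex.exp (-(Complex.I * ω n) * ((2*l:ℝ):ℂ)) = -1 := by
          rw [show -(Complex.I * ω n) * ((2*l:ℝ):ℂ) = ((-n : ℤ) : ℂ) * ((Real.pi:ℂ) * Complex.I) by
            simp only [hω]; push_cast; field_simp]
          rw [gfs_exp_int]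
          exact (hodd.neg).neg_one_zpow
        have hsin : Complex.sin (k * ((l:ℂ) - ((2*l:ℝ):ℂ))) = -Complex.sin (k * l) := by
          rw [show k * ((l:ℂ) - ((2*l:ℝ):ℂ)) = -(k * l) by push_cast; ring, Complex.sin_neg]
        have hcos2 : Complex.cos (k * ((l:ℂ) - ((2*l:ℝ):ℂ))) = Complex.cos (k * l) := by
          rw [show k * ((l:ℂ) - ((2*l:ℝ):ℂ)) = -(k * l) by push_cast; ring, Complex.cos_neg]
        rw [he2l, hsin, hcos2]
        norm_num
        field_simp
        ring
      rw [hstep1, hsplit, hleft, hm1, hJ, hcF]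
      simp only [if_pos hodd]
      rw [Complex.real_smul]
      push_cast
      have hD' : (ω n)^2 - k^2 ≠ 0 := by
        intro hz; apply hD; rw [← neg_sub] at hz; simpa using neg_eq_zero.1 hz
      field_simp
      ring
  -- Summability of the coefficients
  set A : ℝ := (Real.pi/(2*l))^2 with hAdef
  have hA : (0:ℝ) < A := by rw [hAdef]; positivity
  have hnormω : ∀ n : ℤ, ‖(ω n)^2‖ = A * (n:ℝ)^2 := by
    intro n
    have hreal : ω n = ((Real.pi * n / (2*l) : ℝ) : ℂ) := by
      simp only [hω]; push_cast; ring
    rw [norm_pow, hreal, Complex.norm_real, Real.norm_eq_abs, _root_.sq_abs, hAdef]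
    field_simp
  have hsum : Summable cF := by
    obtain ⟨N, hN⟩ := exists_nat_ge ((2 * ‖k‖^2 + 1) / A)
    set C : ℝ := ‖k * Complex.cos (k*(l:ℂ)) / l‖ * (2 / A) with hCdef
    have hbound : ∀ n : ℤ, (N+1 : ℝ) ≤ |(n:ℝ)| → ‖cF n‖ ≤ C * (1/(n:ℝ)^2) := by
      intro n hn
      have hn2 : 2*‖k‖^2 + 1 ≤ A * (n:ℝ)^2 := by
        have h1 : ((N:ℝ)+1)^2 ≤ (n:ℝ)^2 := by
          rw [← _root_.sq_abs ((n:ℝ))]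
          have : (0:ℝ) ≤ (N:ℝ)+1 := by positivity
          nlinarith
        have h2 : 2*‖k‖^2+1 ≤ A * N := by
          rw [div_le_iff₀ hA] at hN; linarith [hN]
        nlinarith [hA.le]
      have hnn : (0:ℝ) < (n:ℝ)^2 := by nlinarith
      rcases Int.even_or_odd n with he | ho
      · rw [hcFeven n (Int.not_odd_iff_even.2 he), norm_zero]; positivity
      · rw [hcFodd n ho, norm_mul]
        have hDge : A*(n:ℝ)^2/2 ≤ ‖(ω n)^2 - k^2‖ := by
          have := norm_sub_norm_le ((ω n)^2) (k^2)
          rw [hnormω n, norm_pow] at this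
          nlinarith
        have hDpos : (0:ℝ) < ‖(ω n)^2 - k^2‖ := by nlinarith
        have : ‖(1:ℂ)/((ω n)^2 - k^2)‖ ≤ 2/(A*(n:ℝ)^2) := by
          rw [norm_div, norm_one]
          rw [div_le_div_iff₀ hDpos (by nlinarith)]
          nlinarith
        calc ‖k * Complex.cos (k*(l:ℂ)) / (l:ℂ)‖ * ‖(1:ℂ)/((ω n)^2 - k^2)‖
            ≤ ‖k * Complex.cos (k*(l:ℂ)) / (l:ℂ)‖ * (2/(A*(n:ℝ)^2)) := by
              apply mul_le_mul_of_nonneg_left this (norm_nonneg _)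
          _ = C * (1/(n:ℝ)^2) := by rw [hCdef]; ring
    apply Summable.of_norm_bounded_eventually (g := fun n : ℤ => C * (1/(n:ℝ)^2))
    · apply Summable.mul_left
      exact (Real.summable_one_div_int_pow (p := 2)).2 one_lt_two
    · rw [Filter.eventually_cofinite]
      apply Set.Finite.subset (Set.finite_Icc (-(N+1) : ℤ) ((N+1 : ℕ) : ℤ))
      intro n hn
      simp only [Set.mem_setOf_eq] at hn
      by_contra hmem
      apply hn
      apply hbound
      rw [Set.mem_Icc] at hmem
      push_neg at hmem
      have : ((N:ℤ)+1) ≤ |n| := by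
        rcases lt_or_ge n 0 with h | h
        · rw [abs_of_neg h]
          rcases lt_or_ge n (-(N+1) : ℤ) with h' | h'
          · omega
          · have := hmem h'; push_cast at this ⊢; omega
        · rw [abs_of_nonneg h]
          rcases lt_or_ge n (-(N+1) : ℤ) with h' | h'
          · omega
          · have := hmem h'; push_cast at this ⊢; omega
      calc ((N:ℝ)+1) = (((N:ℤ)+1 : ℤ) : ℝ) := by push_cast; ring
        _ ≤ ((|n| : ℤ) : ℝ) := by exact_mod_cast this
        _ = |(n:ℝ)| := by push_cast; ring
  -- Assemble
  have hsum0 : Summable (fourierCoeff (⇑f0)) := by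
    rw [funext hcoeff]; exact hsum
  have hHS := has_pointwise_sum_fourier_series_of_summable hsum0 (((0:ℝ)) : AddCircle (4*l))
  have hf00 : f0 (((0:ℝ)) : AddCircle (4*l)) = Complex.sin (k * l) := by
    rw [hf0 0 ⟨by linarith, by linarith⟩]
    simp [hdef]
  have hHS' : HasSum (fun i : ℤ => cF i) (Complex.sin (k * l)) := by
    have heval : ∀ i : ℤ, fourierCoeff (⇑f0) i • fourier i (((0:ℝ)) : AddCircle (4*l)) = cF i := by
      intro i
      rw [hcoeff i]
      have : fourier i (((0:ℝ)) : AddCircle (4*l)) = 1 := by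
        rw [show (((0:ℝ)) : AddCircle (4*l)) = (0 : AddCircle (4*l)) by norm_num]
        exact fourier_eval_zero i
      rw [this, smul_eq_mul, mul_one]
    rw [← funext heval, ← hf00]
    exact hHS
  have hcF0 : cF 0 = 0 := by rw [hcF]; simp [Int.not_odd_iff_even.2 (Even.zero)]
  have hsymmF : ∀ n : ℕ, cF (-(n:ℤ)) = cF (n:ℤ) := by
    intro n
    have hωsq : ω (-(n:ℤ))^2 = ω (n:ℤ)^2 := by simp only [hω]; push_cast; ring
    rw [hcF]
    simp only [odd_neg, hωsq]
  have h3 : HasSum (fun n : ℕ => 2 * cF (n:ℤ)) (Complex.sin (k * l)) := by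
    have h2 := hHS'.nat_add_neg
    rw [hcF0, add_zero] at h2
    have heq : (fun n : ℕ => cF (n:ℤ) + cF (-(n:ℤ))) = fun n : ℕ => 2 * cF (n:ℤ) := by
      funext n; rw [hsymmF]; ring
    rwa [heq] at h2
  have hinj : Function.Injective (fun m : ℕ => 2*m+1) := by
    intro a b hab
    simp only [] at hab
    omega
  have hvan : ∀ x ∉ Set.range (fun m : ℕ => 2*m+1), 2 * cF (x:ℤ) = 0 := by
    intro x hx
    have hxe : Even x := by
      rcases Nat.even_or_odd x with he | ho
      · exact he
      · obtain ⟨m, hm⟩ := ho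
        exact absurd ⟨m, show 2*m+1 = x by omega⟩ hx
    have hno : ¬ Odd ((x:ℕ) : ℤ) := by
      rw [Int.not_odd_iff_even]
      exact_mod_cast hxe
    rw [hcFeven _ hno, mul_zero]
  have h4 := (Function.Injective.hasSum_iff hinj hvan).2 h3
  have h5 := h4.mul_left (1/(2*k*Complex.cos (k*(l:ℂ))))
  have hfun : (fun m : ℕ =>
      (1 / (l : ℂ)) *
        (1 / (((2 * ((m : ℂ) + 1) - 1) * (Real.pi : ℂ) / (2 * (l : ℂ))) ^ 2 - k ^ 2)))
      = fun m : ℕ => (1/(2*k*Complex.cos (k*(l:ℂ)))) *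
          (((fun n : ℕ => 2 * cF (n:ℤ)) ∘ fun m : ℕ => 2*m+1) m) := by
    funext m
    have hoddm : Odd (((2*m+1 : ℕ) : ℤ)) := ⟨(m:ℤ), by push_cast; ring⟩
    show _ = (1/(2*k*Complex.cos (k*(l:ℂ)))) * (2 * cF (((2*m+1 : ℕ) : ℤ)))
    rw [hcFodd _ hoddm]
    have hbase : ((2 * ((m : ℂ) + 1) - 1) * (Real.pi : ℂ) / (2 * (l : ℂ))) ^ 2
        = ω (((2*m+1 : ℕ) : ℤ))^2 := by
      simp only [hω]; push_cast; ring
    have hDm : ω (((2*m+1 : ℕ) : ℤ))^2 - k^2 ≠ 0 := by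
      have h6 := hk2' ((2*m+1 : ℕ) : ℤ) hoddm
      intro hz; apply h6
      rw [← neg_sub] at hz
      have := neg_eq_zero.1 hz
      simpa [hω] using this
    rw [hbase]
    have hkc : 2*k*Complex.cos (k*(l:ℂ)) ≠ 0 := by
      apply mul_ne_zero (mul_ne_zero two_ne_zero hk) hcos
    have hre : (1/(2*k*Complex.cos (k*(l:ℂ)))) *
        (2 * (k * Complex.cos (k*(l:ℂ)) / l * (1/(ω ((2*m+1:ℕ):ℤ)^2 - k^2))))
        = (2*k*Complex.cos (k*(l:ℂ)))/(2*k*Complex.cos (k*(l:ℂ))) *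
          ((1/(l:ℂ)) * (1/(ω ((2*m+1:ℕ):ℤ)^2 - k^2))) := by ring
    rw [hre, div_self hkc, one_mul]
  have hval : Complex.tan (k * (l:ℂ)) / (2*k)
      = (1/(2*k*Complex.cos (k*(l:ℂ)))) * Complex.sin (k * (l:ℂ)) := by
    rw [Complex.tan_eq_sin_div_cos, div_div, one_div_mul_eq_div, mul_comm (Complex.cos (k*(l:ℂ))) (2*k)]
  rw [hfun, hval]
  exact h5
end

section
/- There is no unitary (1+M)×(1+M) complex matrix U (with block decomposition U = [[u₁, U₂],[U₃, U₄]] where u₁ is a scalar, U₂ a 1×M row, U₃ an M×1 column, U₄ an M×M block) such that the effective scalar coupling ũ(k) = u₁ - (1-k) U₂ ((1-k) U₄ - (k+1) I)⁻¹ U₃ satisfies ũ(k) = -(4π + k)/(4π - k) for all k in some nonempty open subset of ℂ where both sides are defined. -/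
open Matrix Polynomial in
/-- A block of a unitary matrix is a contraction (in the ℓ² sense). -/
lemma block_contraction_aux {M : ℕ} (u₁ : ℂ) (U₂ U₃ : Fin M → ℂ)
    (U₄ : Matrix (Fin M) (Fin M) ℂ)
    (hU : Matrix.fromBlocks (Matrix.of fun _ _ => u₁) (Matrix.of fun _ j => U₂ j)
        (Matrix.of fun i _ => U₃ i) U₄ ∈ Matrix.unitaryGroup (Fin 1 ⊕ Fin M) ℂ)
    (v : Fin M → ℂ) :
    ∑ j, Complex.normSq ((U₄ *ᵥ v) j) ≤ ∑ j, Complex.normSq (v j) := by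
  set Uf := Matrix.fromBlocks (Matrix.of fun _ _ => u₁) (Matrix.of fun _ j => U₂ j)
      (Matrix.of fun i _ => U₃ i) U₄ with hUf
  have h1 : star Uf * Uf = 1 := hU.1
  set w : Fin 1 ⊕ Fin M → ℂ := Sum.elim 0 v with hw
  have key : star (Uf *ᵥ w) ⬝ᵥ (Uf *ᵥ w) = star w ⬝ᵥ w := by
    rw [Matrix.star_mulVec, Matrix.dotProduct_mulVec, Matrix.vecMul_vecMul]
    rw [show Ufᴴ * Uf = 1 from h1, Matrix.vecMul_one]
  have key2 : ((∑ i, Complex.normSq ((Uf *ᵥ w) i) : ℝ) : ℂ)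
      = ((∑ i, Complex.normSq (w i) : ℝ) : ℂ) := by
    push_cast
    simpa [dotProduct, Complex.normSq_eq_conj_mul_self] using key
  have key3 : ∑ i, Complex.normSq ((Uf *ᵥ w) i) = ∑ i, Complex.normSq (w i) :=
    Complex.ofReal_inj.mp key2
  have hmv : Uf *ᵥ w = Sum.elim ((Matrix.of fun _ j => U₂ j) *ᵥ v) (U₄ *ᵥ v) := by
    rw [hUf, hw, Matrix.fromBlocks_mulVec]
    simp
  rw [hmv] at key3
  rw [Fintype.sum_sum_type, Fintype.sum_sum_type] at key3
  simp only [Sum.elim_inl, Sum.elim_inr, hw, Pi.zero_apply, Complex.normSq_zero,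
    Finset.sum_const_zero, zero_add] at key3
  have hnn : 0 ≤ ∑ i : Fin 1, Complex.normSq (((Matrix.of fun _ j => U₂ j) *ᵥ v) i) :=
    Finset.sum_nonneg fun _ _ => Complex.normSq_nonneg _
  linarith

/-- No unitary `(1+M)×(1+M)` matrix `U = [[u₁,U₂],[U₃,U₄]]` produces the effective
coupling `ũ(k) = u₁ - (1-k) U₂ ((1-k)U₄ - (k+1)I)⁻¹ U₃` equal to `-(4π+k)/(4π-k)`
on a nonempty open set where both sides are defined. -/
theorem no_unitary_effective_coupling_upper (M : ℕ) (hM : 1 ≤ M)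
    (u₁ : ℂ) (U₂ U₃ : Fin M → ℂ) (U₄ : Matrix (Fin M) (Fin M) ℂ)
    (hU : Matrix.fromBlocks (Matrix.of fun _ _ => u₁) (Matrix.of fun _ j => U₂ j)
        (Matrix.of fun i _ => U₃ i) U₄ ∈ Matrix.unitaryGroup (Fin 1 ⊕ Fin M) ℂ) :
    ¬ ∃ V : Set ℂ, IsOpen V ∧ V.Nonempty ∧
      (∀ k ∈ V, IsUnit ((1 - k) • U₄ - (k + 1) • (1 : Matrix (Fin M) (Fin M) ℂ)) ∧
        (4 * (Real.pi : ℂ) - k) ≠ 0) ∧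
      ∀ k ∈ V,
        u₁ - (1 - k) * ∑ i, ∑ j,
            U₂ i * (((1 - k) • U₄ - (k + 1) • (1 : Matrix (Fin M) (Fin M) ℂ))⁻¹ i j) * U₃ j
          = -((4 * (Real.pi : ℂ) + k) / (4 * (Real.pi : ℂ) - k)) := by
  classical
  rintro ⟨V, hVopen, ⟨k₀, hk₀⟩, hdef, heq⟩
  -- abbreviations
  have c_def : True := trivial
  let c : ℂ := 4 * (Real.pi : ℂ)
  let A : ℂ → Matrix (Fin M) (Fin M) ℂ :=
    fun k => (1 - k) • U₄ - (k + 1) • (1 : Matrix (Fin M) (Fin M) ℂ)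
  let Ap : Matrix (Fin M) (Fin M) (Polynomial ℂ) :=
    ((1 : Polynomial ℂ) - Polynomial.X) • U₄.map Polynomial.C
      - ((Polynomial.X + 1 : Polynomial ℂ)) • (1 : Matrix (Fin M) (Fin M) (Polynomial ℂ))
  have hmap : ∀ k : ℂ, Ap.map (Polynomial.eval k) = A k := by
    intro k
    ext i j
    by_cases h : i = j <;>
      simp [Ap, A, Matrix.map_apply, Matrix.sub_apply, Matrix.smul_apply,
        Matrix.one_apply, h, smul_eq_mul]
  have hdet : ∀ k : ℂ, Polynomial.eval k Ap.det = (A k).det := by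
    intro k
    have := RingHom.map_det (Polynomial.evalRingHom k) Ap
    simpa [RingHom.mapMatrix_apply, Polynomial.coe_evalRingHom, hmap k] using this
  have hadj : ∀ (k : ℂ) (i j : Fin M),
      Polynomial.eval k (Ap.adjugate i j) = (A k).adjugate i j := by
    intro k i j
    have h := RingHom.map_adjugate (Polynomial.evalRingHom k) Ap
    have h2 := congrFun (congrFun (congrArg (fun m : Matrix (Fin M) (Fin M) ℂ => (m : Matrix (Fin M) (Fin M) ℂ)) h) i) j
    simpa [RingHom.mapMatrix_apply, Polynomial.coe_evalRingHom, hmap k,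
      Matrix.map_apply] using h2
  let T : ℂ → ℂ := fun k => ∑ i, ∑ j, U₂ i * (A k).adjugate i j * U₃ j
  let P : Polynomial ℂ :=
    (Polynomial.C c - Polynomial.X) * (Polynomial.C u₁ * Ap.det
      - ((1 : Polynomial ℂ) - Polynomial.X) * ∑ i, ∑ j,
          Polynomial.C (U₂ i) * Ap.adjugate i j * Polynomial.C (U₃ j))
    + (Polynomial.C c + Polynomial.X) * Ap.det
  have hPeval : ∀ k : ℂ,
      P.eval k = (c - k) * (u₁ * (A k).det - (1 - k) * T k) + (c + k) * (A k).det := by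
    intro k
    simp [P, T, hdet, hadj, Polynomial.eval_finset_sum]
  have hroot : ∀ k ∈ V, P.eval k = 0 := by
    intro k hk
    obtain ⟨hunit, hcne⟩ := hdef k hk
    have hunit' : IsUnit (A k) := hunit
    have hdne : (A k).det ≠ 0 :=
      ((Matrix.isUnit_iff_isUnit_det _).mp hunit').ne_zero
    have hinv : ∀ i j, (A k)⁻¹ i j = ((A k).det)⁻¹ * (A k).adjugate i j := by
      intro i j
      rw [Matrix.inv_def, Matrix.smul_apply, Ring.inverse_eq_inv', smul_eq_mul]
    have heqk : u₁ - (1 - k) * ∑ i, ∑ j, U₂ i * ((A k)⁻¹ i j) * U₃ j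
        = -((c + k) / (c - k)) := heq k hk
    have hS : (∑ i, ∑ j, U₂ i * ((A k)⁻¹ i j) * U₃ j) = ((A k).det)⁻¹ * T k := by
      rw [Finset.mul_sum]
      refine Finset.sum_congr rfl fun i _ => ?_
      rw [Finset.mul_sum]
      refine Finset.sum_congr rfl fun j _ => ?_
      rw [hinv i j]; ring
    rw [hS] at heqk
    have hckne : (c - k) ≠ 0 := hcne
    rw [hPeval k]
    field_simp at heqk
    linear_combination heqk
  have hVinf : V.Infinite := infinite_of_mem_nhds k₀ (hVopen.mem_nhds hk₀)
  have hP0 : P = 0 :=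
    Polynomial.eq_zero_of_infinite_isRoot _ (hVinf.mono fun k hk => hroot k hk)
  have hπ : (0 : ℝ) < Real.pi := Real.pi_pos
  have hc0 : c ≠ 0 := by
    simp only [c, mul_ne_zero_iff]
    constructor
    · norm_num
    · exact_mod_cast Real.pi_ne_zero
  have hdc : (A c).det = 0 := by
    have h0 : P.eval c = 0 := by rw [hP0]; simp
    rw [hPeval c] at h0
    have h2 : (c + c) * (A c).det = 0 := by linear_combination h0
    rcases mul_eq_zero.mp h2 with h | h
    · exact absurd h (by
        have : c + c ≠ 0 := by
          intro hcc
          apply hc0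
          have : (2 : ℂ) * c = 0 := by linear_combination hcc
          simpa using (mul_eq_zero.mp this).resolve_left (by norm_num)
        exact this)
    · exact h
  -- eigenvector of U₄ with eigenvalue of modulus > 1
  obtain ⟨v, hv0, hvA⟩ := (Matrix.exists_mulVec_eq_zero_iff).mpr hdc
  have h1c : (1 : ℂ) - c ≠ 0 := by
    intro h
    have : (c : ℂ) = 1 := by linear_combination -h
    have hre := congrArg Complex.re this
    simp [c] at hre
    nlinarith [Real.pi_gt_three]
  have hexp : (1 - c) • (U₄.mulVec v) - (c + 1) • v = 0 := by
    simpa [A, Matrix.sub_mulVec, Matrix.smul_mulVec, Matrix.one_mulVec] using hvA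
  have hμ : U₄.mulVec v = ((c + 1) / (1 - c)) • v := by
    have hq : (1 - c) • (U₄.mulVec v) = (c + 1) • v := by
      rwa [sub_eq_zero] at hexp
    funext j
    have hj := congrFun hq j
    simp only [Pi.smul_apply, smul_eq_mul] at hj ⊢
    field_simp
    linear_combination hj
  have hle := block_contraction_aux u₁ U₂ U₃ U₄ hU v
  rw [hμ] at hle
  have hsum : ∑ j, Complex.normSq ((((c + 1) / (1 - c)) • v) j)
      = Complex.normSq ((c + 1) / (1 - c)) * ∑ j, Complex.normSq (v j) := by
    rw [Finset.mul_sum]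
    exact Finset.sum_congr rfl fun j _ => by
      simp [Pi.smul_apply, smul_eq_mul, Complex.normSq_mul]
  rw [hsum] at hle
  have hs : 0 < ∑ j, Complex.normSq (v j) := by
    obtain ⟨j, hj⟩ := Function.ne_iff.mp hv0
    have hj' : 0 < Complex.normSq (v j) := by
      simpa [Complex.normSq_pos] using hj
    exact Finset.sum_pos' (fun i _ => Complex.normSq_nonneg _) ⟨j, Finset.mem_univ j, hj'⟩
  have hμ1 : Complex.normSq ((c + 1) / (1 - c)) ≤ 1 := by
    nlinarith [hle, hs]
  have hμval : Complex.normSq ((c + 1) / (1 - c))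
      = ((4 * Real.pi + 1) / (1 - 4 * Real.pi)) ^ 2 := by
    have : ((c + 1) / (1 - c)) = (((4 * Real.pi + 1) / (1 - 4 * Real.pi) : ℝ) : ℂ) := by
      push_cast
      rfl
    rw [this, Complex.normSq_ofReal, sq]
  rw [hμval] at hμ1
  have hr : (3 : ℝ) < Real.pi := Real.pi_gt_three
  rw [div_pow, div_le_one (by nlinarith)] at hμ1
  nlinarith
end
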